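/- Let a : ℕ → ℝ satisfy a n > 0 for all n ≥ 1, and let T n = √(a 1 + √(a 2 + ⋯ + √(a n))) denote the n-th approximant of the continued square root. If the series ∑_{n=1}^∞ 2^(-n) * (a n) * ((a 1)*(a 2)*⋯*(a n))^(-1/2) converges, then the sequence (T n) converges to a finite limit. -/

import Mathlib

open Filter Real Finset

/-- Backward-recurrence approximant of the continued square root:
`csqrtAppr a k n = √(a k + √(a (k+1) + ⋯ + √(a n)))`, with `csqrtAppr a k n = 0` for `k > n`. -/
noncomputable def csqrtAppr (a : ℕ → ℝ) (k n : ℕ) : ℝ :=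
  if h : k > n then 0 else Real.sqrt (a k + csqrtAppr a (k + 1) n)
termination_by n + 1 - k
decreasing_by omega

lemma csqrtAppr_nonneg (a : ℕ → ℝ) (k n : ℕ) : 0 ≤ csqrtAppr a k n := by
  rw [csqrtAppr]
  split
  · exact le_refl 0
  · exact Real.sqrt_nonneg _

lemma csqrtAppr_le_succ (a : ℕ → ℝ) (n k : ℕ) :
    csqrtAppr a k n ≤ csqrtAppr a k (n + 1) := by
  by_cases h1 : k > n
  · have e1 : csqrtAppr a k n = 0 := by rw [csqrtAppr]; simp [h1]
    rw [e1]; exact csqrtAppr_nonneg a k (n + 1)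
  · have h2 : ¬ k > n + 1 := by omega
    have e1 : csqrtAppr a k n = Real.sqrt (a k + csqrtAppr a (k + 1) n) := by
      rw [csqrtAppr, dif_neg h1]
    have e2 : csqrtAppr a k (n + 1) = Real.sqrt (a k + csqrtAppr a (k + 1) (n + 1)) := by
      rw [csqrtAppr, dif_neg h2]
    rw [e1, e2]
    exact Real.sqrt_le_sqrt (by linarith [csqrtAppr_le_succ a n (k + 1)])
termination_by n + 1 - k
decreasing_by omega

lemma sqrt_diff_le (c x y : ℝ) (hc : 0 < c) (hx : 0 ≤ x) (hxy : x ≤ y) :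
    Real.sqrt (c + y) - Real.sqrt (c + x) ≤ (y - x) / (2 * Real.sqrt c) := by
  have hsc : 0 < Real.sqrt c := Real.sqrt_pos.2 hc
  have h1 : Real.sqrt c ≤ Real.sqrt (c + x) := Real.sqrt_le_sqrt (by linarith)
  have h2 : (Real.sqrt (c + x)) ^ 2 = c + x := Real.sq_sqrt (by linarith)
  have h3 : 0 ≤ Real.sqrt (c + x) := Real.sqrt_nonneg _
  rw [sub_le_iff_le_add]
  rw [Real.sqrt_le_iff]
  have hd : 0 ≤ (y - x) / (2 * Real.sqrt c) := div_nonneg (by linarith) (by positivity)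
  constructor
  · exact add_nonneg hd h3
  · have key : (y - x) / 2 ≤ Real.sqrt (c + x) * ((y - x) / (2 * Real.sqrt c)) := by
      have h4 : 1 ≤ Real.sqrt (c + x) / Real.sqrt c := (one_le_div hsc).2 h1
      have h5 : (0:ℝ) ≤ (y - x) / 2 := by linarith
      calc (y - x) / 2 = 1 * ((y - x) / 2) := (one_mul _).symm
        _ ≤ (Real.sqrt (c + x) / Real.sqrt c) * ((y - x) / 2) :=
            mul_le_mul_of_nonneg_right h4 h5
        _ = Real.sqrt (c + x) * ((y - x) / (2 * Real.sqrt c)) := by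
            rw [div_mul_div_comm, mul_div_assoc, mul_comm (Real.sqrt c) 2]
    nlinarith [sq_nonneg ((y - x) / (2 * Real.sqrt c))]

lemma csqrtAppr_diff_le (a : ℕ → ℝ) (ha : ∀ n, 1 ≤ n → 0 < a n) (n k : ℕ)
    (hk1 : 1 ≤ k) (hk2 : k ≤ n + 1) :
    csqrtAppr a k (n + 1) - csqrtAppr a k n ≤
      Real.sqrt (a (n + 1)) / (2 ^ (n + 1 - k) * Real.sqrt (∏ i ∈ Finset.Icc k n, a i)) := by
  by_cases hkn : k = n + 1
  · subst hkn
    have e0 : csqrtAppr a (n + 1) n = 0 := by rw [csqrtAppr]; simp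
    have e1 : csqrtAppr a (n + 2) (n + 1) = 0 := by
      rw [csqrtAppr]; simp [show n + 2 > n + 1 by omega]
    have e2 : csqrtAppr a (n + 1) (n + 1) = Real.sqrt (a (n + 1)) := by
      rw [csqrtAppr, dif_neg (by omega : ¬ n + 1 > n + 1), e1, add_zero]
    rw [e0, e2, sub_zero]
    rw [Finset.Icc_eq_empty (by omega), Finset.prod_empty, Real.sqrt_one]
    simp
  · -- k ≤ n
    have hkn' : k ≤ n := by omega
    have hak : 0 < a k := ha k hk1
    have hsak : 0 < Real.sqrt (a k) := Real.sqrt_pos.2 hak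
    have hx : 0 ≤ csqrtAppr a (k + 1) n := csqrtAppr_nonneg a (k + 1) n
    have hxy : csqrtAppr a (k + 1) n ≤ csqrtAppr a (k + 1) (n + 1) := csqrtAppr_le_succ a n (k + 1)
    have ih := csqrtAppr_diff_le a ha n (k + 1) (by omega) (by omega)
    have e1 : csqrtAppr a k (n + 1) = Real.sqrt (a k + csqrtAppr a (k + 1) (n + 1)) := by
      rw [csqrtAppr, dif_neg (by omega : ¬ k > n + 1)]
    have e2 : csqrtAppr a k n = Real.sqrt (a k + csqrtAppr a (k + 1) n) := by
      rw [csqrtAppr, dif_neg (by omega : ¬ k > n)]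
    rw [e1, e2]
    have step := sqrt_diff_le (a k) _ _ hak hx hxy
    refine step.trans ?_
    have hQ : 0 < ∏ i ∈ Finset.Icc (k + 1) n, a i :=
      Finset.prod_pos fun i hi => ha i (by simp only [Finset.mem_Icc] at hi; omega)
    have hsQ : 0 < Real.sqrt (∏ i ∈ Finset.Icc (k + 1) n, a i) := Real.sqrt_pos.2 hQ
    have hdiv : (csqrtAppr a (k + 1) (n + 1) - csqrtAppr a (k + 1) n) / (2 * Real.sqrt (a k)) ≤
        (Real.sqrt (a (n + 1)) /
          (2 ^ (n + 1 - (k + 1)) * Real.sqrt (∏ i ∈ Finset.Icc (k + 1) n, a i)))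
          / (2 * Real.sqrt (a k)) :=
      div_le_div_of_nonneg_right ih (by positivity)
    refine hdiv.trans_eq ?_
    have hins : Finset.Icc k n = insert k (Finset.Icc (k + 1) n) := by
      ext i
      simp only [Finset.mem_Icc, Finset.mem_insert]
      omega
    have hprod : ∏ i ∈ Finset.Icc k n, a i = a k * ∏ i ∈ Finset.Icc (k + 1) n, a i := by
      rw [hins, Finset.prod_insert (by simp)]
    rw [hprod, Real.sqrt_mul hak.le]
    have hnk : n + 1 - k = (n + 1 - (k + 1)) + 1 := by omega
    rw [hnk, pow_succ]
    rw [div_div]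
    congr 1
    ring
termination_by n + 1 - k
decreasing_by omega

/-- Problem 163 of Pólya and Szegő (1925): if `∑ 2^(-n) * a n * (a 1 ⋯ a n)^(-1/2)`
converges, then the continued square root of the positive terms `a n` converges. -/
theorem continued_sqrt_converges_of_summable (a : ℕ → ℝ)
    (ha : ∀ n, 1 ≤ n → 0 < a n)
    (hsum : Summable fun n : ℕ =>
      (2 : ℝ) ^ (-(n : ℝ)) * a n * (∏ i ∈ Finset.Icc 1 n, a i) ^ (-(1 : ℝ) / 2)) :
    ∃ L : ℝ, Tendsto (fun n => csqrtAppr a 1 n) atTop (nhds L) := by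
  set t : ℕ → ℝ := fun n : ℕ =>
    (2 : ℝ) ^ (-(n : ℝ)) * a n * (∏ i ∈ Finset.Icc 1 n, a i) ^ (-(1 : ℝ) / 2) with ht
  -- positivity of t for n ≥ 1
  have htpos : ∀ m : ℕ, 1 ≤ m → 0 < t m := by
    intro m hm
    have hP : 0 < ∏ i ∈ Finset.Icc 1 m, a i :=
      Finset.prod_pos fun i hi => ha i (by simp only [Finset.mem_Icc] at hi; omega)
    have : 0 < a m := ha m hm
    have h2 : (0:ℝ) < (2 : ℝ) ^ (-(m : ℝ)) := Real.rpow_pos_of_pos (by norm_num) _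
    have h3 : (0:ℝ) < (∏ i ∈ Finset.Icc 1 m, a i) ^ (-(1 : ℝ) / 2) :=
      Real.rpow_pos_of_pos hP _
    positivity
  -- key step bound
  have key : ∀ n : ℕ, 1 ≤ n → csqrtAppr a 1 (n + 1) ≤ csqrtAppr a 1 n + 2 * t (n + 1) := by
    intro n hn
    have hd := csqrtAppr_diff_le a ha n 1 le_rfl (by omega)
    have heq : Real.sqrt (a (n + 1)) / (2 ^ (n + 1 - 1) * Real.sqrt (∏ i ∈ Finset.Icc 1 n, a i))
        = 2 * t (n + 1) := by
      have hP : 0 < ∏ i ∈ Finset.Icc 1 n, a i :=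
        Finset.prod_pos fun i hi => ha i (by simp only [Finset.mem_Icc] at hi; omega)
      have han : 0 < a (n + 1) := ha (n + 1) (by omega)
      have hP' : ∏ i ∈ Finset.Icc 1 (n + 1), a i = (∏ i ∈ Finset.Icc 1 n, a i) * a (n + 1) :=
        Finset.prod_Icc_succ_top (by omega) a
      have hrw : ((∏ i ∈ Finset.Icc 1 (n + 1), a i) : ℝ) ^ (-(1 : ℝ) / 2)
          = (Real.sqrt (∏ i ∈ Finset.Icc 1 n, a i) * Real.sqrt (a (n + 1)))⁻¹ := by
        rw [hP', show (-(1:ℝ)/2) = -(1/2) by norm_num,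
          Real.rpow_neg (by positivity), ← Real.sqrt_eq_rpow,
          Real.sqrt_mul hP.le]
      have h2rw : (2 : ℝ) ^ (-((n + 1 : ℕ) : ℝ)) = ((2 : ℝ) ^ (n + 1 : ℕ))⁻¹ := by
        rw [Real.rpow_neg (by norm_num), Real.rpow_natCast]
      have hsa : 0 < Real.sqrt (a (n + 1)) := Real.sqrt_pos.2 han
      have hsP : 0 < Real.sqrt (∏ i ∈ Finset.Icc 1 n, a i) := Real.sqrt_pos.2 hP
      have hsa2 : Real.sqrt (a (n + 1)) ^ 2 = a (n + 1) := Real.sq_sqrt han.le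
      rw [ht]
      simp only []
      rw [hrw, h2rw]
      rw [show n + 1 - 1 = n by omega]
      rw [pow_succ]
      field_simp
      linear_combination hsa2
    linarith [hd.trans_eq heq]
  -- summability of shifted terms
  have hts : Summable fun j : ℕ => t (j + 2) := (summable_nat_add_iff 2).2 hsum
  have htnn : ∀ j : ℕ, 0 ≤ t (j + 2) := fun j => (htpos (j + 2) (by omega)).le
  -- partial-sum bound
  have hpart : ∀ m : ℕ, csqrtAppr a 1 (m + 1) ≤
      csqrtAppr a 1 1 + 2 * ∑ j ∈ Finset.range m, t (j + 2) := by
    intro m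
    induction m with
    | zero => simp
    | succ m ihm =>
      have hk := key (m + 1) (by omega)
      rw [Finset.sum_range_succ]
      calc csqrtAppr a 1 (m + 1 + 1) ≤ csqrtAppr a 1 (m + 1) + 2 * t (m + 2) := hk
        _ ≤ csqrtAppr a 1 1 + 2 * ∑ j ∈ Finset.range m, t (j + 2) + 2 * t (m + 2) := by linarith
        _ = csqrtAppr a 1 1 + 2 * (∑ j ∈ Finset.range m, t (j + 2) + t (m + 2)) := by ring
  set B : ℝ := csqrtAppr a 1 1 + 2 * ∑' j : ℕ, t (j + 2) with hB
  have hbd : ∀ n : ℕ, csqrtAppr a 1 n ≤ B := by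
    intro n
    have htsum : (0:ℝ) ≤ ∑' j : ℕ, t (j + 2) := tsum_nonneg htnn
    cases n with
    | zero =>
      have : csqrtAppr a 1 0 = 0 := by rw [csqrtAppr]; simp
      rw [this, hB]
      have := csqrtAppr_nonneg a 1 1
      linarith
    | succ m =>
      refine (hpart m).trans ?_
      rw [hB]
      have hle : ∑ j ∈ Finset.range m, t (j + 2) ≤ ∑' j : ℕ, t (j + 2) :=
        Summable.sum_le_tsum (Finset.range m) (fun j _ => htnn j) hts
      linarith
  have hmono : Monotone fun n => csqrtAppr a 1 n :=
    monotone_nat_of_le_succ fun n => csqrtAppr_le_succ a n 1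
  rcases tendsto_of_monotone hmono with h | h
  · exfalso
    obtain ⟨n, hn⟩ := (h.eventually_gt_atTop B).exists
    exact absurd (hbd n) (not_le.2 hn)
  · exact h
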